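/- arXiv:1602.08062 — 3 statements merged into one kernel-verified Lean document; each statement's English description precedes it below -/
import Mathlib

section
/- Let z₀ : Fin n → Fin K be balanced with each community of size m = n/K (K ≥ 2), and let z : Fin n → Fin K be any assignment with d(z,z₀) = r, where d is the permutation-invariant Hamming distance. Define n↑↑(z,z₀) = #{(i,j): i<j, zᵢ=zⱼ, z₀ᵢ=z₀ⱼ}. Then n↑↑(z,z₀) ≥ (n-r)²/(2K) - (n-r)/2. -/
open Finset

/-- Permutation-invariant Hamming distance between community assignments. -/
def permDist {n K : ℕ} (z z' : Fin n → Fin K) : ℕ :=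
  univ.inf' univ_nonempty (fun δ : Equiv.Perm (Fin K) => hammingDist (⇑δ ∘ z) z')

/-- `n↑↑(z,z₀)`: pairs i < j together under both `z` and `z₀`. -/
def nUpUp {n K : ℕ} (z z₀ : Fin n → Fin K) : ℕ :=
  (univ.filter (fun p : Fin n × Fin n =>
    p.1 < p.2 ∧ z p.1 = z p.2 ∧ z₀ p.1 = z₀ p.2)).card

theorem nUpUp_lower_bound {n K m r : ℕ} (hK : 2 ≤ K) (hnm : n = K * m)
    (z z₀ : Fin n → Fin K)
    (hbal : ∀ h : Fin K, (univ.filter (fun i => z₀ i = h)).card = m)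
    (hr : permDist z z₀ = r) :
    ((n : ℝ) - r) ^ 2 / (2 * K) - ((n : ℝ) - r) / 2 ≤ (nUpUp z z₀ : ℝ) := by
  obtain ⟨δ, -, hδ⟩ := Finset.exists_mem_eq_inf' (s := (univ : Finset (Equiv.Perm (Fin K))))
    univ_nonempty (fun δ : Equiv.Perm (Fin K) => hammingDist (⇑δ ∘ z) z₀)
  rw [permDist, hδ] at hr
  set A : Finset (Fin n) := univ.filter (fun i => δ (z i) = z₀ i) with hA
  have hcard : A.card + r = n := by
    have h2 := Finset.card_filter_add_card_filter_not
      (s := (univ : Finset (Fin n))) (p := fun i => δ (z i) = z₀ i)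
    rw [← hr, hammingDist]
    simpa [A, Function.comp] using h2
  set N := A.card with hN
  -- fibers
  set a : Fin K → ℕ := fun k => (A.filter (fun i => z₀ i = k)).card with ha
  have hsum : ∑ k, a k = N := (Finset.card_eq_sum_card_fiberwise
    (f := z₀) (s := A) (t := univ) (fun i _ => mem_univ _)).symm
  -- the pair set
  set P : Finset (Fin n × Fin n) := (A ×ˢ A).filter (fun p => z₀ p.1 = z₀ p.2) with hP
  have hPcard : P.card = ∑ k, (a k) ^ 2 := by
    rw [Finset.card_eq_sum_card_fiberwise (f := fun p => z₀ p.1) (s := P) (t := univ)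
      (fun p _ => mem_univ _)]
    refine Finset.sum_congr rfl (fun k _ => ?_)
    have : P.filter (fun p => z₀ p.1 = k)
        = (A.filter (fun i => z₀ i = k)) ×ˢ (A.filter (fun i => z₀ i = k)) := by
      ext p
      simp only [P, mem_filter, mem_product]
      constructor
      · rintro ⟨⟨⟨h1, h2⟩, h3⟩, h4⟩
        exact ⟨⟨h1, h4⟩, ⟨h2, h3 ▸ h4⟩⟩
      · rintro ⟨⟨h1, h4⟩, ⟨h2, h5⟩⟩
        exact ⟨⟨⟨h1, h2⟩, h4.trans h5.symm⟩, h4⟩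
    rw [this, Finset.card_product]
    ring
  -- split P
  set S : Finset (Fin n × Fin n) := P.filter (fun p => p.1 < p.2) with hS
  have hdiag : (P.filter (fun p => p.1 = p.2)).card = N := by
    have : P.filter (fun p => p.1 = p.2) = A.image (fun i => (i, i)) := by
      ext p
      simp only [P, mem_filter, mem_product, mem_image]
      constructor
      · rintro ⟨⟨⟨h1, h2⟩, h3⟩, h4⟩
        exact ⟨p.1, h1, by cases p; simp_all⟩
      · rintro ⟨i, hi, rfl⟩
        exact ⟨⟨⟨hi, hi⟩, rfl⟩, rfl⟩
    rw [this, Finset.card_image_of_injective _ (fun i j h => (Prod.mk.injEq _ _ _ _ ▸ h).1)]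
  have hgt : (P.filter (fun p => p.2 < p.1)).card = S.card := by
    apply Finset.card_bij (fun p _ => Prod.swap p)
    · rintro ⟨i, j⟩ hp
      simp only [P, S, mem_filter, mem_product] at hp ⊢
      exact ⟨⟨⟨hp.1.1.2, hp.1.1.1⟩, hp.1.2.symm⟩, hp.2⟩
    · rintro p _ q _ h
      exact Prod.swap_injective h
    · rintro ⟨i, j⟩ hp
      refine ⟨(j, i), ?_, rfl⟩
      simp only [P, S, mem_filter, mem_product] at hp ⊢
      exact ⟨⟨⟨hp.1.1.2, hp.1.1.1⟩, hp.1.2.symm⟩, hp.2⟩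
  have hsplit : P.card = 2 * S.card + N := by
    have h1 : P.card = (P.filter (fun p => p.1 < p.2)).card
        + (P.filter (fun p => p.1 = p.2)).card + (P.filter (fun p => p.2 < p.1)).card := by
      rw [← Finset.card_union_of_disjoint, ← Finset.card_union_of_disjoint]
      · congr 1
        ext p
        simp only [mem_union, mem_filter]
        rcases lt_trichotomy p.1 p.2 with h | h | h <;> aesop
      · rw [Finset.disjoint_left]
        rintro p hp hq
        simp only [mem_union, mem_filter] at hp hq
        rcases hp with ⟨-, h⟩ | ⟨-, h⟩
        · exact absurd hq.2 (asymm h)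
        · exact absurd hq.2 (h ▸ lt_irrefl _)
      · rw [Finset.disjoint_left]
        rintro p hp hq
        simp only [mem_filter] at hp hq
        exact absurd hp.2 (hq.2 ▸ lt_irrefl _)
    rw [← hS] at h1
    rw [h1, hdiag, hgt]
    ring
  -- S ⊆ nUpUp set
  have hSle : S.card ≤ nUpUp z z₀ := by
    apply Finset.card_le_card
    intro p hp
    simp only [S, P, mem_filter, mem_product, A] at hp
    obtain ⟨⟨⟨h1, h2⟩, h3⟩, h4⟩ := hp
    simp only [mem_filter, mem_univ, true_and] at h1 h2
    refine Finset.mem_filter.2 ⟨mem_univ _, h4, ?_, h3⟩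
    apply δ.injective
    rw [h1, h2, h3]
  -- Cauchy-Schwarz
  have hCS : (N : ℝ) ^ 2 ≤ (K : ℝ) * ∑ k, ((a k : ℝ)) ^ 2 := by
    have := sq_sum_le_card_mul_sum_sq (s := (univ : Finset (Fin K)))
      (f := fun k => (a k : ℝ))
    simpa [← Nat.cast_sum, hsum, Finset.card_univ] using this
  have hPR : (∑ k, ((a k : ℝ)) ^ 2) = 2 * S.card + N := by
    have : ((P.card : ℝ)) = ∑ k, ((a k : ℝ)) ^ 2 := by
      rw [hPcard]; push_cast; ring_nf
    rw [← this, hsplit]; push_cast; ring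
  have hNn : ((n : ℝ) - r) = N := by
    have : (N : ℝ) + r = n := by exact_mod_cast congrArg (Nat.cast : ℕ → ℝ) hcard
    linarith
  have hK' : (0 : ℝ) < K := by positivity
  have hle : (S.card : ℝ) ≤ nUpUp z z₀ := by exact_mod_cast hSle
  rw [hNn, sub_le_iff_le_add, div_le_iff₀ (by positivity : (0:ℝ) < 2 * K)]
  nlinarith [hCS, hPR, hle, hK', mul_le_mul_of_nonneg_left hle (le_of_lt hK')]
end

section
/- Let z₀ : Fin n → Fin K be balanced with community sizes m = n/K, and z any assignment achieving permutation-invariant distance r from z₀ (with the labeling minimizing Hamming distance). Define n↓↑(z,z₀) = #{(i,j): i<j, zᵢ≠zⱼ, z₀ᵢ=z₀ⱼ}. Then n↓↑(z,z₀) ≤ m·r - r²/(2(K-1)). -/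
open Finset

/-- `n↓↑(z,z₀)`: pairs i < j separated by `z` but together under `z₀`. -/
def nDownUp {n K : ℕ} (z z₀ : Fin n → Fin K) : ℕ :=
  (univ.filter (fun p : Fin n × Fin n =>
    p.1 < p.2 ∧ z p.1 ≠ z p.2 ∧ z₀ p.1 = z₀ p.2)).card

lemma eq_pairs_card {n K : ℕ} (s : Finset (Fin n)) (f : Fin n → Fin K) :
    ((s ×ˢ s).filter (fun p => f p.1 = f p.2)).card
      = ∑ l : Fin K, ((s.filter (fun i => f i = l)).card) ^ 2 := by
  rw [card_eq_sum_card_fiberwise (f := fun p => f p.1) (t := univ) (fun _ _ => mem_univ _)]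
  refine sum_congr rfl fun l _ => ?_
  have h : ((s ×ˢ s).filter (fun p => f p.1 = f p.2)).filter (fun p => f p.1 = l)
      = (s.filter (fun i => f i = l)) ×ˢ (s.filter (fun i => f i = l)) := by
    ext p
    simp only [mem_filter, mem_product]
    constructor
    · rintro ⟨⟨⟨h1, h2⟩, h3⟩, h4⟩
      exact ⟨⟨h1, h4⟩, ⟨h2, h3 ▸ h4⟩⟩
    · rintro ⟨⟨h1, h4⟩, ⟨h2, h5⟩⟩
      exact ⟨⟨⟨h1, h2⟩, h4.trans h5.symm⟩, h4⟩
  rw [h, card_product, sq]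

lemma ne_pairs_card {n K : ℕ} (s : Finset (Fin n)) (f : Fin n → Fin K) :
    ((s ×ˢ s).filter (fun p => f p.1 ≠ f p.2)).card
      + ∑ l : Fin K, ((s.filter (fun i => f i = l)).card) ^ 2 = s.card ^ 2 := by
  rw [← eq_pairs_card, add_comm, card_filter_add_card_filter_not, card_product, sq]

theorem nDownUp_upper_bound {n K m r : ℕ} (hK : 2 ≤ K) (hnm : n = K * m)
    (z z₀ : Fin n → Fin K)
    (hbal : ∀ h : Fin K, (univ.filter (fun i => z₀ i = h)).card = m)
    (hr : permDist z z₀ = r) (hmin : hammingDist z z₀ = r) :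
    (nDownUp z z₀ : ℝ) ≤ (m : ℝ) * r - (r : ℝ) ^ 2 / (2 * ((K : ℝ) - 1)) := by
  classical
  set G : Fin K → Finset (Fin n) := fun k => univ.filter (fun i => z₀ i = k) with hG
  set c : Fin K → Fin K → ℕ := fun k l => ((G k).filter (fun i => z i = l)).card with hc
  set a : Fin K → ℕ := fun k => ((G k).filter (fun i => ¬ z i = k)).card with ha
  set U : Fin K → ℕ := fun k => (((G k) ×ˢ (G k)).filter (fun p => z p.1 ≠ z p.2)).card with hU
  -- a k + c k k = m
  have hac : ∀ k, c k k + a k = m := by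
    intro k
    rw [hc, ha]
    rw [card_filter_add_card_filter_not]
    exact hbal k
  -- fiber decomposition of G k by z
  have hsumc : ∀ k, ∑ l, c k l = m := by
    intro k
    rw [← hbal k]
    exact (card_eq_sum_card_fiberwise (f := z) (t := univ) (fun _ _ => mem_univ _)).symm
  -- sum over erase k
  have hsum_erase : ∀ k, ∑ l ∈ univ.erase k, c k l = a k := by
    intro k
    have h1 : c k k + ∑ l ∈ univ.erase k, c k l = m := by
      rw [add_comm, sum_erase_add _ _ (mem_univ k)]
      exact hsumc k
    have h2 := hac k
    omega
  -- hamming distance gives ∑ a k = r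
  have hsuma : ∑ k, a k = r := by
    rw [← hmin]
    unfold hammingDist
    rw [card_eq_sum_card_fiberwise (f := z₀) (t := univ) (fun _ _ => mem_univ _)]
    refine sum_congr rfl fun k _ => ?_
    rw [ha, hG]
    refine congrArg Finset.card ?_
    ext i
    simp only [mem_filter, mem_univ, true_and]
    constructor
    · rintro ⟨h2, h1⟩; exact ⟨fun h => h1 (h.trans h2), h2⟩
    · rintro ⟨h1, h2⟩; exact ⟨h2, fun h => h1 (h.trans h2.symm)⟩
  -- U k + ∑ c² = m²
  have hUk : ∀ k, U k + ∑ l, (c k l) ^ 2 = m ^ 2 := by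
    intro k
    have := ne_pairs_card (G k) z
    rwa [hbal k] at this
  -- 2 * nDownUp = ∑ U k
  have hdouble : ∑ k, U k = 2 * nDownUp z z₀ := by
    set S : Finset (Fin n × Fin n) :=
      univ.filter (fun p => z p.1 ≠ z p.2 ∧ z₀ p.1 = z₀ p.2) with hS
    have h1 : S.card = ∑ k, U k := by
      rw [card_eq_sum_card_fiberwise (f := fun p => z₀ p.1) (t := univ) (fun _ _ => mem_univ _)]
      refine sum_congr rfl fun k _ => (congrArg Finset.card ?_).symm
      ext p
      simp only [hS, hU, hG, mem_filter, mem_univ, true_and, mem_product]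
      constructor
      · rintro ⟨⟨h1, h2⟩, h3⟩
        exact ⟨⟨h3, h1.trans h2.symm⟩, h1⟩
      · rintro ⟨⟨h3, h4⟩, h1⟩
        exact ⟨⟨h1, h4.symm.trans h1⟩, h3⟩
    set T₁ : Finset (Fin n × Fin n) := S.filter (fun p => p.1 < p.2) with hT₁
    set T₂ : Finset (Fin n × Fin n) := S.filter (fun p => ¬ p.1 < p.2) with hT₂
    have hsplitS : T₁.card + T₂.card = S.card :=
      card_filter_add_card_filter_not _
    have hT1 : T₁.card = nDownUp z z₀ := by
      unfold nDownUp
      refine congrArg Finset.card ?_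
      ext p
      simp only [hT₁, hS, mem_filter, mem_univ, true_and]
      tauto
    have hmem : ∀ p : Fin n × Fin n, p.swap ∈ T₂ ↔ p ∈ T₁ := by
      intro p
      simp only [hT₁, hT₂, hS, mem_filter, mem_univ, true_and, Prod.fst_swap, Prod.snd_swap]
      constructor
      · rintro ⟨⟨h3, h4⟩, h5⟩
        have hne : p.1 ≠ p.2 := fun h => h3 (congrArg z h.symm)
        exact ⟨⟨fun h => h3 h.symm, h4.symm⟩, lt_of_le_of_ne (not_lt.mp h5) hne⟩
      · rintro ⟨⟨h3, h4⟩, h5⟩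
        exact ⟨⟨fun h => h3 h.symm, h4.symm⟩, not_lt.mpr h5.le⟩
    have hT2 : T₂.card = T₁.card := by
      have himg : T₂.image Prod.swap = T₁ := by
        ext q
        simp only [mem_image]
        constructor
        · rintro ⟨p, hp, rfl⟩
          have h := hmem p.swap
          rw [Prod.swap_swap] at h
          exact h.mp hp
        · intro hq
          exact ⟨q.swap, (hmem q).mpr hq, Prod.swap_swap q⟩
      rw [← himg, card_image_of_injective _ Prod.swap_injective]
    omega
  -- real versions
  have hK1 : (1:ℝ) ≤ (K:ℝ) - 1 := by
    have : (2:ℝ) ≤ (K:ℝ) := by exact_mod_cast hK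
    linarith
  have hK0 : (0:ℝ) < (K:ℝ) - 1 := by linarith
  -- per-k inequality: (K-1) * U k ≤ 2(K-1) m a k - K (a k)^2
  have hper : ∀ k, ((K:ℝ) - 1) * (U k : ℝ)
      ≤ 2 * ((K:ℝ) - 1) * m * a k - K * (a k : ℝ) ^ 2 := by
    intro k
    have hcs : ((a k : ℝ)) ^ 2 ≤ ((K:ℝ) - 1) * ∑ l ∈ univ.erase k, (c k l : ℝ) ^ 2 := by
      have := sq_sum_le_card_mul_sum_sq (s := univ.erase k) (f := fun l => (c k l : ℝ))
      have hcard : ((univ.erase k).card : ℝ) = (K:ℝ) - 1 := by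
        rw [card_erase_of_mem (mem_univ k), card_univ, Fintype.card_fin]
        have : 1 ≤ K := by omega
        push_cast [Nat.cast_sub this]
        ring
      have hsum : ∑ l ∈ univ.erase k, (c k l : ℝ) = (a k : ℝ) := by
        exact_mod_cast congrArg (Nat.cast : ℕ → ℝ) (hsum_erase k)
      rw [hsum, hcard] at this
      exact this
    have hsplit : (U k : ℝ) + ((c k k : ℝ) ^ 2 + ∑ l ∈ univ.erase k, (c k l : ℝ) ^ 2)
        = (m : ℝ) ^ 2 := by
      have h2 : ((c k k : ℕ) : ℝ) ^ 2 + ∑ l ∈ univ.erase k, (c k l : ℝ) ^ 2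
          = ∑ l, (c k l : ℝ) ^ 2 := by
        rw [add_comm, sum_erase_add _ _ (mem_univ k)]
      rw [h2]
      exact_mod_cast congrArg (Nat.cast : ℕ → ℝ) (hUk k)
    have hcc : (c k k : ℝ) = (m : ℝ) - (a k : ℝ) := by
      have h0 := hac k
      have h1 : (c k k : ℝ) + (a k : ℝ) = (m : ℝ) := by exact_mod_cast h0
      linarith
    rw [hcc] at hsplit
    nlinarith [hsplit, hcs]
  -- sum of per-k inequalities
  have hsumU : ((K:ℝ) - 1) * (2 * (nDownUp z z₀ : ℝ))
      ≤ 2 * ((K:ℝ) - 1) * m * r - K * ∑ k, (a k : ℝ) ^ 2 := by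
    have h1 : ∑ k, ((K:ℝ) - 1) * (U k : ℝ)
        ≤ ∑ k, (2 * ((K:ℝ) - 1) * m * a k - K * (a k : ℝ) ^ 2) :=
      sum_le_sum fun k _ => hper k
    rw [← mul_sum] at h1
    have h2 : ∑ k, ((U k : ℕ) : ℝ) = 2 * (nDownUp z z₀ : ℝ) := by
      rw [← Nat.cast_sum]
      exact_mod_cast congrArg (Nat.cast : ℕ → ℝ) hdouble
    rw [h2] at h1
    have h3 : ∑ k, (2 * ((K:ℝ) - 1) * m * a k - K * (a k : ℝ) ^ 2)
        = 2 * ((K:ℝ) - 1) * m * (∑ k, (a k : ℝ)) - K * ∑ k, (a k : ℝ) ^ 2 := by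
      rw [sum_sub_distrib, ← mul_sum, ← mul_sum]
    have h4 : ∑ k, (a k : ℝ) = (r : ℝ) := by
      exact_mod_cast congrArg (Nat.cast : ℕ → ℝ) hsuma
    rw [h3, h4] at h1
    exact h1
  -- Cauchy-Schwarz over all k
  have hcs2 : (r : ℝ) ^ 2 ≤ (K : ℝ) * ∑ k, (a k : ℝ) ^ 2 := by
    have := sq_sum_le_card_mul_sum_sq (s := (univ : Finset (Fin K)))
      (f := fun k => (a k : ℝ))
    have h4 : ∑ k, (a k : ℝ) = (r : ℝ) := by
      exact_mod_cast congrArg (Nat.cast : ℕ → ℝ) hsuma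
    rw [h4, card_univ, Fintype.card_fin] at this
    exact this
  -- conclude
  have key : 2 * ((K:ℝ) - 1) * (nDownUp z z₀ : ℝ) + (r:ℝ) ^ 2
      ≤ 2 * ((K:ℝ) - 1) * ((m:ℝ) * r) := by nlinarith [hsumU, hcs2]
  have h2K : (0:ℝ) < 2 * ((K:ℝ) - 1) := by linarith
  have hdiv : (r:ℝ) ^ 2 / (2 * ((K:ℝ) - 1)) ≤ (m:ℝ) * r - (nDownUp z z₀ : ℝ) := by
    rw [div_le_iff₀ h2K]
    nlinarith [key]
  linarith
end

section
/- Let z₀ be balanced with K groups of size m and let z achieve permutation-invariant distance r from z₀ with r/m → 0. Then n↑↓(z,z₀) + n↓↑(z,z₀) ≥ 2rm(1 - r/m); in particular, for r ≤ m/2 this sum is at least rm. -/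
open Finset

/-- `n↑↓(z,z₀)`: pairs i < j together under `z` but separated by `z₀`. -/
def nUpDown {n K : ℕ} (z z₀ : Fin n → Fin K) : ℕ :=
  (univ.filter (fun p : Fin n × Fin n =>
    p.1 < p.2 ∧ z p.1 = z p.2 ∧ z₀ p.1 ≠ z₀ p.2)).card

lemma sym_pair_count {n : ℕ} (P : Fin n × Fin n → Prop) [DecidablePred P]
    (hsymm : ∀ p : Fin n × Fin n, P p → P p.swap)
    (hne : ∀ p : Fin n × Fin n, P p → p.1 ≠ p.2) :
    (univ.filter P).card = 2 * (univ.filter (fun p => p.1 < p.2 ∧ P p)).card := by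
  classical
  have hsplit : (univ.filter P) =
      (univ.filter (fun p => p.1 < p.2 ∧ P p)) ∪ (univ.filter (fun p => p.2 < p.1 ∧ P p)) := by
    ext p
    simp only [mem_filter, mem_union, mem_univ, true_and]
    constructor
    · intro hp
      rcases lt_or_gt_of_ne (hne p hp) with h | h
      · exact Or.inl ⟨h, hp⟩
      · exact Or.inr ⟨h, hp⟩
    · rintro (⟨_, hp⟩ | ⟨_, hp⟩) <;> exact hp
  have hdisj : Disjoint (univ.filter (fun p : Fin n × Fin n => p.1 < p.2 ∧ P p))
      (univ.filter (fun p : Fin n × Fin n => p.2 < p.1 ∧ P p)) := by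
    rw [disjoint_left]
    intro p hp hq
    simp only [mem_filter] at hp hq
    exact absurd hq.2.1 (not_lt.2 hp.2.1.le)
  have hcard : (univ.filter (fun p : Fin n × Fin n => p.2 < p.1 ∧ P p)).card =
      (univ.filter (fun p : Fin n × Fin n => p.1 < p.2 ∧ P p)).card := by
    apply Finset.card_bij' (fun p _ => Prod.swap p) (fun p _ => Prod.swap p)
    · intro p hp
      simp only [mem_filter, mem_univ, true_and] at hp ⊢
      exact ⟨hp.1, hsymm p hp.2⟩
    · intro p hp
      simp only [mem_filter, mem_univ, true_and] at hp ⊢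
      exact ⟨hp.1, hsymm p hp.2⟩
    · intro p _; simp
    · intro p _; simp
  rw [hsplit, card_union_of_disjoint hdisj, hcard, two_mul]

theorem nUpDown_add_nDownUp_lower_bound {n K m r : ℕ} (hK : 2 ≤ K) (hm : 0 < m)
    (hnm : n = K * m) (z z₀ : Fin n → Fin K)
    (hbal : ∀ h : Fin K, (univ.filter (fun i => z₀ i = h)).card = m)
    (hr : permDist z z₀ = r) (hmin : hammingDist z z₀ = r) :
    2 * (r : ℝ) * m * (1 - (r : ℝ) / m) ≤ (nUpDown z z₀ : ℝ) + (nDownUp z z₀ : ℝ) ∧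
    ((r : ℝ) ≤ (m : ℝ) / 2 →
      (r : ℝ) * m ≤ (nUpDown z z₀ : ℝ) + (nDownUp z z₀ : ℝ)) := by
  classical
  set A : Fin K → Finset (Fin n) := fun k => univ.filter (fun i => z₀ i = k ∧ z i ≠ k) with hAdef
  set B : Fin K → Finset (Fin n) := fun k => univ.filter (fun i => z i = k ∧ z₀ i ≠ k) with hBdef
  set G : Fin K → Finset (Fin n) := fun k => univ.filter (fun i => z₀ i = k ∧ z i = k) with hGdef
  -- a_k + g_k = m
  have hGA : ∀ k, (A k).card + (G k).card = m := by
    intro k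
    have h1 : A k = (univ.filter (fun i => z₀ i = k)).filter (fun i => ¬ z i = k) := by
      rw [hAdef, filter_filter]
    have h2 : G k = (univ.filter (fun i => z₀ i = k)).filter (fun i => z i = k) := by
      rw [hGdef, filter_filter]
    rw [h1, h2, add_comm, Finset.card_filter_add_card_filter_not, hbal k]
  -- sum of a_k = r
  have hD : hammingDist z z₀ = (univ.filter (fun i => z i ≠ z₀ i)).card := rfl
  have hsumA : ∑ k, (A k).card = r := by
    have := Finset.card_eq_sum_card_fiberwise
      (f := z₀) (s := univ.filter (fun i => z i ≠ z₀ i)) (t := univ) (fun x _ => mem_univ _)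
    rw [hD, this] at hmin
    rw [← hmin]
    apply Finset.sum_congr rfl
    intro k _
    congr 1
    rw [hAdef, filter_filter]
    apply filter_congr
    intro i _
    constructor
    · rintro ⟨h1, h2⟩; exact ⟨fun h => h2 (h.trans h1), h1⟩
    · rintro ⟨h1, h2⟩; exact ⟨h2, fun h => h1 (h2 ▸ h)⟩
  have hsumB : ∑ k, (B k).card = r := by
    have := Finset.card_eq_sum_card_fiberwise
      (f := z) (s := univ.filter (fun i => z i ≠ z₀ i)) (t := univ) (fun x _ => mem_univ _)
    rw [hD, this] at hmin
    rw [← hmin]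
    apply Finset.sum_congr rfl
    intro k _
    congr 1
    rw [hBdef, filter_filter]
    apply filter_congr
    intro i _
    constructor
    · rintro ⟨h1, h2⟩; exact ⟨fun h => h2 (h.symm.trans h1), h1⟩
    · rintro ⟨h1, h2⟩; exact ⟨h2, fun h => h1 (h2.trans h.symm)⟩
  -- lower bound for nDownUp
  have hNd : ∑ k, (G k).card * (A k).card ≤ nDownUp z z₀ := by
    set P : Fin n × Fin n → Prop := fun p => z p.1 ≠ z p.2 ∧ z₀ p.1 = z₀ p.2 with hPdef
    have hcount : (univ.filter P).card = 2 * nDownUp z z₀ := by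
      rw [sym_pair_count P (fun p hp => ⟨fun h => hp.1 h.symm, hp.2.symm⟩)
        (fun p hp h => hp.1 (by rw [h]))]
      rfl
    set U : Fin K → Finset (Fin n × Fin n) := fun k => (G k ×ˢ A k) ∪ (A k ×ˢ G k) with hUdef
    have hUcard : ∀ k, (U k).card = 2 * ((G k).card * (A k).card) := by
      intro k
      have hd : Disjoint (G k ×ˢ A k) (A k ×ˢ G k) := by
        rw [disjoint_left]
        rintro ⟨i, j⟩ h1 h2
        rw [mem_product] at h1 h2
        have hG1 := h1.1; have hA1 := h2.1
        simp only [hGdef, hAdef, mem_filter, mem_univ, true_and] at hG1 hA1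
        exact hA1.2 hG1.2
      rw [hUdef]
      simp only
      rw [card_union_of_disjoint hd, card_product, card_product]
      ring
    have hdisjU : ∀ x ∈ (univ : Finset (Fin K)), ∀ y ∈ (univ : Finset (Fin K)),
        x ≠ y → Disjoint (U x) (U y) := by
      intro x _ y _ hxy
      rw [disjoint_left]
      rintro ⟨i, j⟩ h1 h2
      have hx : z₀ i = x := by
        rw [hUdef] at h1; simp only [mem_union, mem_product] at h1
        rcases h1 with ⟨h, _⟩ | ⟨h, _⟩ <;>
          simp only [hGdef, hAdef, mem_filter, mem_univ, true_and] at h <;> exact h.1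
      have hy : z₀ i = y := by
        rw [hUdef] at h2; simp only [mem_union, mem_product] at h2
        rcases h2 with ⟨h, _⟩ | ⟨h, _⟩ <;>
          simp only [hGdef, hAdef, mem_filter, mem_univ, true_and] at h <;> exact h.1
      exact hxy (hx ▸ hy)
    have hsub : (univ.biUnion U) ⊆ univ.filter P := by
      intro p hp
      rw [mem_biUnion] at hp
      obtain ⟨k, _, hk⟩ := hp
      rw [hUdef] at hk
      simp only [mem_union, mem_product] at hk
      rw [mem_filter]
      refine ⟨mem_univ _, ?_⟩
      rcases hk with ⟨h1, h2⟩ | ⟨h1, h2⟩ <;>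
        simp only [hGdef, hAdef, mem_filter, mem_univ, true_and] at h1 h2
      · exact ⟨by rw [h1.2]; exact fun h => h2.2 h.symm, by rw [h1.1, h2.1]⟩
      · exact ⟨by rw [h2.2]; exact fun h => h1.2 h, by rw [h1.1, h2.1]⟩
    have := (Finset.card_le_card hsub)
    rw [Finset.card_biUnion hdisjU] at this
    have h2 : ∑ k, 2 * ((G k).card * (A k).card) ≤ 2 * nDownUp z z₀ := by
      rw [← hcount]
      calc ∑ k, 2 * ((G k).card * (A k).card) = ∑ k, (U k).card := by
            exact Finset.sum_congr rfl (fun k _ => (hUcard k).symm)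
        _ ≤ (univ.filter P).card := this
    rw [← Finset.mul_sum] at h2
    exact Nat.le_of_mul_le_mul_left h2 (by norm_num)
  -- lower bound for nUpDown
  have hNu : ∑ k, (G k).card * (B k).card ≤ nUpDown z z₀ := by
    set P : Fin n × Fin n → Prop := fun p => z p.1 = z p.2 ∧ z₀ p.1 ≠ z₀ p.2 with hPdef
    have hcount : (univ.filter P).card = 2 * nUpDown z z₀ := by
      rw [sym_pair_count P (fun p hp => ⟨hp.1.symm, fun h => hp.2 h.symm⟩)
        (fun p hp h => hp.2 (by rw [h]))]
      rfl
    set U : Fin K → Finset (Fin n × Fin n) := fun k => (G k ×ˢ B k) ∪ (B k ×ˢ G k) with hUdef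
    have hUcard : ∀ k, (U k).card = 2 * ((G k).card * (B k).card) := by
      intro k
      have hd : Disjoint (G k ×ˢ B k) (B k ×ˢ G k) := by
        rw [disjoint_left]
        rintro ⟨i, j⟩ h1 h2
        rw [mem_product] at h1 h2
        have hG1 := h1.1; have hB1 := h2.1
        simp only [hGdef, hBdef, mem_filter, mem_univ, true_and] at hG1 hB1
        exact hB1.2 hG1.1
      rw [hUdef]
      simp only
      rw [card_union_of_disjoint hd, card_product, card_product]
      ring
    have hdisjU : ∀ x ∈ (univ : Finset (Fin K)), ∀ y ∈ (univ : Finset (Fin K)),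
        x ≠ y → Disjoint (U x) (U y) := by
      intro x _ y _ hxy
      rw [disjoint_left]
      rintro ⟨i, j⟩ h1 h2
      have hx : z i = x := by
        rw [hUdef] at h1; simp only [mem_union, mem_product] at h1
        rcases h1 with ⟨h, _⟩ | ⟨h, _⟩ <;>
          simp only [hGdef, hBdef, mem_filter, mem_univ, true_and] at h
        · exact h.2
        · exact h.1
      have hy : z i = y := by
        rw [hUdef] at h2; simp only [mem_union, mem_product] at h2
        rcases h2 with ⟨h, _⟩ | ⟨h, _⟩ <;>
          simp only [hGdef, hBdef, mem_filter, mem_univ, true_and] at h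
        · exact h.2
        · exact h.1
      exact hxy (hx ▸ hy)
    have hsub : (univ.biUnion U) ⊆ univ.filter P := by
      intro p hp
      rw [mem_biUnion] at hp
      obtain ⟨k, _, hk⟩ := hp
      rw [hUdef] at hk
      simp only [mem_union, mem_product] at hk
      rw [mem_filter]
      refine ⟨mem_univ _, ?_⟩
      rcases hk with ⟨h1, h2⟩ | ⟨h1, h2⟩ <;>
        simp only [hGdef, hBdef, mem_filter, mem_univ, true_and] at h1 h2
      · exact ⟨by rw [h1.2, h2.1], by rw [h1.1]; exact fun h => h2.2 h.symm⟩
      · exact ⟨by rw [h1.1, h2.2], by rw [h2.1]; exact fun h => h1.2 h⟩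
    have := (Finset.card_le_card hsub)
    rw [Finset.card_biUnion hdisjU] at this
    have h2 : ∑ k, 2 * ((G k).card * (B k).card) ≤ 2 * nUpDown z z₀ := by
      rw [← hcount]
      calc ∑ k, 2 * ((G k).card * (B k).card) = ∑ k, (U k).card := by
            exact Finset.sum_congr rfl (fun k _ => (hUcard k).symm)
        _ ≤ (univ.filter P).card := this
    rw [← Finset.mul_sum] at h2
    exact Nat.le_of_mul_le_mul_left h2 (by norm_num)
  -- key natural-number inequality
  have key : ∑ k, (m - (A k).card) * ((A k).card + (B k).card)
      ≤ nUpDown z z₀ + nDownUp z z₀ := by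
    have : ∑ k, (m - (A k).card) * ((A k).card + (B k).card)
        = ∑ k, (G k).card * (B k).card + ∑ k, (G k).card * (A k).card := by
      rw [← Finset.sum_add_distrib]
      apply Finset.sum_congr rfl
      intro k _
      have hg : m - (A k).card = (G k).card := by have := hGA k; omega
      rw [hg, Nat.mul_add, Nat.add_comm]
    rw [this]
    exact Nat.add_le_add hNu hNd
  have haleR : ∀ k, (A k).card ≤ r := fun k =>
    hsumA ▸ Finset.single_le_sum (f := fun k => (A k).card) (fun _ _ => Nat.zero_le _) (mem_univ k)
  have hmR : (0:ℝ) < m := by exact_mod_cast hm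
  have hEq : 2*(r:ℝ)*m*(1 - (r:ℝ)/m) = 2*(r:ℝ)*((m:ℝ) - r) := by field_simp
  have main : 2 * (r : ℝ) * m * (1 - (r : ℝ) / m) ≤ (nUpDown z z₀ : ℝ) + (nDownUp z z₀ : ℝ) := by
    rw [hEq]
    by_cases hrm : r ≤ m
    · have hnat : (m - r) * (2 * r) ≤ nUpDown z z₀ + nDownUp z z₀ := by
        calc (m-r)*(2*r) = ∑ k, (m-r)*((A k).card + (B k).card) := by
              rw [← Finset.mul_sum, Finset.sum_add_distrib, hsumA, hsumB]; ring
          _ ≤ ∑ k, (m - (A k).card)*((A k).card+(B k).card) :=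
              Finset.sum_le_sum (fun k _ => Nat.mul_le_mul_right _ (Nat.sub_le_sub_left (haleR k) m))
          _ ≤ _ := key
      have hcast := (Nat.cast_le (α := ℝ)).2 hnat
      push_cast [Nat.cast_sub hrm] at hcast
      linarith
    · push_neg at hrm
      have hrm' : (m:ℝ) < r := by exact_mod_cast hrm
      have hr0 : (0:ℝ) ≤ r := Nat.cast_nonneg _
      nlinarith [Nat.cast_nonneg (α := ℝ) (nUpDown z z₀), Nat.cast_nonneg (α := ℝ) (nDownUp z z₀)]
  refine ⟨main, fun hhalf => ?_⟩
  have hmain := main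
  rw [hEq] at hmain
  have hr0 : (0:ℝ) ≤ r := Nat.cast_nonneg _
  nlinarith
end
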